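/- Let E be a directed graph. The operator (H,S) ↦ (H⊥⊥, S⊥⊥) on the set of admissible pairs of E is extensive: for every admissible pair (H,S), (H,S) ≤ (H⊥⊥, S⊥⊥), i.e. H ⊆ H⊥⊥ and S ⊆ H⊥⊥ ∪ S⊥⊥. -/
import Mathlib


namespace GraphAnn

variable {V E : Type*}

/-- `u ≥ v`: there is a (possibly trivial) path from `u` to `v`. -/
def Reach (s r : E → V) : V → V → Prop :=
  Relation.ReflTransGen (fun a b => ∃ e, s e = a ∧ r e = b)

/-- The root `R(W)` of a set of vertices. -/
def Root (s r : E → V) (W : Set V) : Set V :=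
  {u | ∃ v ∈ W, Reach s r u v}

def Hereditary (s r : E → V) (H : Set V) : Prop :=
  ∀ u v, u ∈ H → Reach s r u v → v ∈ H

def IsSink (s : E → V) (v : V) : Prop := ∀ e : E, s e ≠ v

def IsInfiniteEmitter (s : E → V) (v : V) : Prop := {e : E | s e = v}.Infinite

def IsRegular (s : E → V) (v : V) : Prop := ¬ IsSink s v ∧ ¬ IsInfiniteEmitter s v

def Saturated (s r : E → V) (H : Set V) : Prop :=
  ∀ v, IsRegular s v → (∀ e : E, s e = v → r e ∈ H) → v ∈ H

/-- `V⊥ = E⁰ − R(V)`. -/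
def perp (s r : E → V) (W : Set V) : Set V := {v | v ∉ Root s r W}

/-- Breaking vertices `B_H`. -/
def Breaking (s r : E → V) (H : Set V) : Set V :=
  {v | v ∉ H ∧ IsInfiniteEmitter s v ∧
    {e : E | s e = v ∧ r e ∉ H}.Nonempty ∧ {e : E | s e = v ∧ r e ∉ H}.Finite}

/-- `(H,S)` is an admissible pair. -/
def Admissible (s r : E → V) (H S : Set V) : Prop :=
  Hereditary s r H ∧ Saturated s r H ∧ S ⊆ Breaking s r H

/-- `S⊥ = B_{H⊥} − S`. -/
def Sperp (s r : E → V) (H S : Set V) : Set V := Breaking s r (perp s r H) \ S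

/-- A cycle: a closed path of positive length in which distinct edges have
distinct sources. -/
structure GCycle (s r : E → V) where
  edges : List E
  ne : edges ≠ []
  chain : edges.Chain' (fun e f => r e = s f)
  closed : r (edges.getLast ne) = s (edges.head ne)
  srcNodup : (edges.map s).Nodup

/-- The vertex set `c⁰` of a cycle. -/
def GCycle.verts {s r : E → V} (c : GCycle s r) : Set V :=
  {v | ∃ e ∈ c.edges, s e = v}

/-- A cycle has an exit. -/
def GCycle.HasExit {s r : E → V} (c : GCycle s r) : Prop :=
  ∃ e, s e ∈ c.verts ∧ e ∉ c.edges

/-- An extreme cycle: it has an exit and every exit returns. -/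
def GCycle.Extreme {s r : E → V} (c : GCycle s r) : Prop :=
  c.HasExit ∧ ∀ v ∈ c.verts, ∀ w, Reach s r v w → ∃ u ∈ c.verts, Reach s r w u

/-- The vertex set `α⁰` of an infinite path `α`. -/
def InfPathVerts (s : E → V) (α : ℕ → E) : Set V := {v | ∃ n, s (α n) = v}

/-- Conditions (a), (b), (c): the graph is all-reflexive. -/
def AllReflexiveGraph (s r : E → V) : Prop :=
  (∀ c : GCycle s r, ¬ c.HasExit ∨ c.Extreme) ∧
  (∀ v, IsInfiniteEmitter s v → ∃ c : GCycle s r, v ∈ c.verts) ∧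
  (∀ α : ℕ → E, (∀ n, r (α n) = s (α (n + 1))) →
    {e : E | s e ∈ InfPathVerts s α ∧ r e ∉ Root s r (InfPathVerts s α)}.Finite)

/-- The operator `(H,S) ↦ (H⊥⊥, S⊥⊥)` on admissible pairs is extensive:
`(H,S) ≤ (H⊥⊥, S⊥⊥)`. -/
theorem perp_perp_extensive (s r : E → V) (H S : Set V)
    (h : Admissible s r H S) :
    H ⊆ perp s r (perp s r H) ∧
      S ⊆ perp s r (perp s r H) ∪ Sperp s r (perp s r H) (Sperp s r H S) := by
  obtain ⟨hher, hsat, hSB⟩ := h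
  have hsub : H ⊆ perp s r (perp s r H) := by
    intro v hv ⟨w, hw, hreach⟩
    exact hw ⟨w, hher v w hv hreach, Relation.ReflTransGen.refl⟩
  refine ⟨hsub, ?_⟩
  intro v hv
  by_cases hvpp : v ∈ perp s r (perp s r H)
  · exact Or.inl hvpp
  · obtain ⟨hvH, hinf, hne, hfin⟩ := hSB hv
    refine Or.inr ⟨⟨hvpp, hinf, ?_, hfin.subset ?_⟩, fun hc => hc.2 hv⟩
    · -- nonempty: some edge from v with range not in H⊥⊥
      have : v ∈ Root s r (perp s r H) := by
        by_contra hc; exact hvpp hc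
      obtain ⟨w, hw, hreach⟩ := this
      rcases hreach.cases_head with heq | ⟨u, ⟨e, hse, hre⟩, hreach'⟩
      · subst heq
        obtain ⟨e, he⟩ := hinf.nonempty
        refine ⟨e, he, fun hc => hc ⟨r e, ?_, Relation.ReflTransGen.refl⟩⟩
        intro ⟨h', hh', hreach'⟩
        exact hw ⟨h', hh', Relation.ReflTransGen.head ⟨e, he, rfl⟩ hreach'⟩
      · refine ⟨e, hse, fun hc => hc ⟨w, hw, ?_⟩⟩
        rw [hre]; exact hreach'
    · -- finiteness: subset of the breaking edge set for H
      intro e ⟨hse, hre⟩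
      exact ⟨hse, fun hH => hre (hsub hH)⟩

end GraphAnn
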